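/- Assume (A0)–(A5) hold, η_D exists, and μ₀ < 0. Then ν_D⁰ > 0, i.e., max_{x∈Ω̄} f(x,0,η_D(x)) > 0. -/

import Mathlib

open MeasureTheory Filter BoundedContinuousFunction
open Set

lemma aux_anti {φ φ' : ℝ → ℝ}
    (hc : ContinuousOn φ (Set.Ici 0))
    (hd : ∀ t ∈ Set.Ici (0:ℝ), HasDerivWithinAt φ (φ' t) (Set.Ici 0) t)
    (hneg : ∀ t ∈ Set.Ici (0:ℝ), φ' t < 0) : StrictAntiOn φ (Set.Ici 0) := by
  apply strictAntiOn_of_deriv_neg (convex_Ici 0) hc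
  intro t ht
  rw [interior_Ici] at ht
  have h1 := (hd t (Set.mem_Ici.mpr (le_of_lt (Set.mem_Ioi.mp ht)))).hasDerivAt (Ici_mem_nhds ht)
  rw [h1.deriv]
  exact hneg t (Set.mem_Ici.mpr (le_of_lt (Set.mem_Ioi.mp ht)))

lemma aux_mvt {φ φ' : ℝ → ℝ} {a b : ℝ} (ha : 0 ≤ a) (hab : a < b)
    (hc : ContinuousOn φ (Set.Icc a b))
    (hd : ∀ t ∈ Set.Ici (0:ℝ), HasDerivWithinAt φ (φ' t) (Set.Ici 0) t) :
    ∃ c ∈ Set.Ioo a b, φ' c * (b - a) = φ b - φ a := by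
  obtain ⟨c, hc1, hc2⟩ := exists_hasDerivAt_eq_slope φ φ' hab hc
    (fun t ht => (hd t (ha.trans ht.1.le)).hasDerivAt (Ici_mem_nhds (lt_of_le_of_lt ha ht.1)))
  refine ⟨c, hc1, ?_⟩
  rw [hc2, div_mul_cancel₀]
  exact sub_ne_zero.mpr hab.ne'

lemma aux_slice1 {F2 : ℝ → ℝ → ℝ}
    (h : ContinuousOn (fun q : ℝ × ℝ => F2 q.1 q.2) (Set.Ici 0 ×ˢ Set.Ici 0)) {v : ℝ}
    (hv : 0 ≤ v) : ContinuousOn (fun u => F2 u v) (Set.Ici 0) :=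
  h.comp (f := fun u : ℝ => ((u, v) : ℝ × ℝ)) (Continuous.continuousOn (by fun_prop))
    (fun u hu => ⟨hu, hv⟩)

lemma aux_slice2 {F2 : ℝ → ℝ → ℝ}
    (h : ContinuousOn (fun q : ℝ × ℝ => F2 q.1 q.2) (Set.Ici 0 ×ˢ Set.Ici 0)) {u : ℝ}
    (hu : 0 ≤ u) : ContinuousOn (fun v => F2 u v) (Set.Ici 0) :=
  h.comp (f := fun v : ℝ => ((u, v) : ℝ × ℝ)) (Continuous.continuousOn (by fun_prop))
    (fun v hv => ⟨hu, hv⟩)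

set_option maxHeartbeats 1000000 in
lemma aux_key {f g fu fv gu gv : ℝ → ℝ → ℝ} {M a η : ℝ}
    (hdfu : ∀ u ∈ Set.Ici (0:ℝ), ∀ v ∈ Set.Ici (0:ℝ),
      HasDerivWithinAt (fun s => f s v) (fu u v) (Set.Ici 0) u)
    (hdfv : ∀ u ∈ Set.Ici (0:ℝ), ∀ v ∈ Set.Ici (0:ℝ),
      HasDerivWithinAt (fun s => f u s) (fv u v) (Set.Ici 0) v)
    (hdgu : ∀ u ∈ Set.Ici (0:ℝ), ∀ v ∈ Set.Ici (0:ℝ),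
      HasDerivWithinAt (fun s => g s v) (gu u v) (Set.Ici 0) u)
    (hdgv : ∀ u ∈ Set.Ici (0:ℝ), ∀ v ∈ Set.Ici (0:ℝ),
      HasDerivWithinAt (fun s => g u s) (gv u v) (Set.Ici 0) v)
    (hfc : ContinuousOn (fun q : ℝ × ℝ => f q.1 q.2) (Set.Ici 0 ×ˢ Set.Ici 0))
    (hgc : ContinuousOn (fun q : ℝ × ℝ => g q.1 q.2) (Set.Ici 0 ×ˢ Set.Ici 0))
    (hfuc : ContinuousOn (fun q : ℝ × ℝ => fu q.1 q.2) (Set.Ici 0 ×ˢ Set.Ici 0))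
    (hfvc : ContinuousOn (fun q : ℝ × ℝ => fv q.1 q.2) (Set.Ici 0 ×ˢ Set.Ici 0))
    (hguc : ContinuousOn (fun q : ℝ × ℝ => gu q.1 q.2) (Set.Ici 0 ×ˢ Set.Ici 0))
    (hgvc : ContinuousOn (fun q : ℝ × ℝ => gv q.1 q.2) (Set.Ici 0 ×ˢ Set.Ici 0))
    (hsign : ∀ u ∈ Set.Ici (0:ℝ), ∀ v ∈ Set.Ici (0:ℝ),
      fu u v < 0 ∧ fv u v < 0 ∧ gu u v < 0 ∧ gv u v < 0)
    (hdet : ∀ u ∈ Set.Ici (0:ℝ), ∀ v ∈ Set.Ici (0:ℝ), fv u v * gu u v < fu u v * gv u v)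
    (hM : 0 < M) (hA4 : ∀ v ∈ Set.Ici (0:ℝ), f M v < 0)
    (hη : 0 < η) (hfa : f a 0 = 0)
    (hgs : g (max a 0) 0 < g 0 η) : 0 < f 0 η := by
  by_contra hcon
  push_neg at hcon
  -- strict antitonicity of the four slices
  have Sfu : ∀ v ∈ Set.Ici (0:ℝ), StrictAntiOn (fun u => f u v) (Set.Ici 0) := fun v hv =>
    aux_anti (aux_slice1 hfc hv) (fun u hu => hdfu u hu v hv)
      (fun u hu => (hsign u hu v hv).1)
  have Sfv : ∀ u ∈ Set.Ici (0:ℝ), StrictAntiOn (fun v => f u v) (Set.Ici 0) := fun u hu =>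
    aux_anti (aux_slice2 hfc hu) (fun v hv => hdfv u hu v hv)
      (fun v hv => (hsign u hu v hv).2.1)
  have Sgv : ∀ u ∈ Set.Ici (0:ℝ), StrictAntiOn (fun v => g u v) (Set.Ici 0) := fun u hu =>
    aux_anti (aux_slice2 hgc hu) (fun v hv => hdgv u hu v hv)
      (fun v hv => (hsign u hu v hv).2.2.2)
  rcases le_or_gt a 0 with ha | ha
  · -- then max a 0 = 0 and hgs contradicts monotonicity of g 0 ·
    rw [max_eq_right ha] at hgs
    have := Sgv 0 self_mem_Ici (self_mem_Ici) (le_of_lt hη) hη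
    simp only at this
    linarith
  -- now 0 < a
  rw [max_eq_left ha.le] at hgs
  have haM : a < M := by
    by_contra h
    push_neg at h
    have : f a 0 < 0 := by
      rcases eq_or_lt_of_le h with h' | h'
      · rw [← h']; exact hA4 0 self_mem_Ici
      · calc f a 0 < f M 0 := Sfu 0 self_mem_Ici (le_of_lt hM) (hM.le.trans h) h'
          _ < 0 := hA4 0 self_mem_Ici
    linarith [this, hfa.ge]
  have hf00 : 0 < f 0 0 := by
    have := Sfu 0 self_mem_Ici self_mem_Ici (le_of_lt ha) ha
    simp only at this
    linarith [hfa]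
  -- the crossing point vs on the v-axis
  have hc0η : ContinuousOn (fun v => f 0 v) (Set.Icc 0 η) :=
    (aux_slice2 hfc le_rfl).mono (Icc_subset_Ici_self)
  obtain ⟨vs, hvsIcc, hvs0⟩ : ∃ vs ∈ Set.Icc 0 η, f 0 vs = 0 := by
    have h0m : (0:ℝ) ∈ Set.Icc (f 0 η) (f 0 0) := ⟨hcon, hf00.le⟩
    obtain ⟨vs, hvs, hv⟩ := intermediate_value_Icc' hη.le hc0η h0m
    exact ⟨vs, hvs, hv⟩
  have hvspos : 0 < vs := by
    rcases eq_or_lt_of_le hvsIcc.1 with h | h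
    · exfalso; rw [← h] at hvs0; linarith
    · exact h
  have hfge : ∀ v ∈ Set.Icc (0:ℝ) vs, 0 ≤ f 0 v := by
    intro v hv
    rcases eq_or_lt_of_le hv.2 with h | h
    · rw [h, hvs0]
    · have := Sfv 0 self_mem_Ici hv.1 (hv.1.trans hv.2) h
      simp only at this
      linarith [hvs0]
  -- the implicit function G on [0, vs]
  have hGex : ∀ v ∈ Set.Icc (0:ℝ) vs, ∃ u, u ∈ Set.Icc 0 M ∧ f u v = 0 := by
    intro v hv
    have hv0 : (0:ℝ) ≤ v := hv.1
    have hvη : v ∈ Set.Ici (0:ℝ) := hv0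
    have h1 : f M v < 0 := hA4 v hvη
    have h2 : 0 ≤ f 0 v := hfge v hv
    have hcM : ContinuousOn (fun u => f u v) (Set.Icc 0 M) :=
      (aux_slice1 hfc hv0).mono Icc_subset_Ici_self
    obtain ⟨u, hu, hu0⟩ := intermediate_value_Icc' hM.le hcM (⟨h1.le, h2⟩ :
      (0:ℝ) ∈ Set.Icc (f M v) (f 0 v))
    exact ⟨u, hu, hu0⟩
  choose! G hGmem hGroot using hGex
  have hGanti : ∀ v1 ∈ Set.Icc (0:ℝ) vs, ∀ v2 ∈ Set.Icc (0:ℝ) vs, v1 < v2 → G v2 < G v1 := by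
    intro v1 hv1 v2 hv2 h12
    have hG1m := hGmem v1 hv1
    have hG2m := hGmem v2 hv2
    have h1 : f (G v1) v2 < f (G v1) v1 := Sfv (G v1) hG1m.1 hv1.1 hv2.1 h12
    rw [hGroot v1 hv1] at h1
    have h2 : f (G v1) v2 < f (G v2) v2 := by rw [hGroot v2 hv2]; exact h1
    by_contra h
    push_neg at h
    rcases eq_or_lt_of_le h with h' | h'
    · rw [h'] at h2; linarith
    · have := Sfu v2 hv2.1 hG1m.1 hG2m.1 h'
      simp only at this
      linarith
  have hleft : (0:ℝ) ∈ Set.Icc (0:ℝ) vs := ⟨le_rfl, hvspos.le⟩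
  have hright : vs ∈ Set.Icc (0:ℝ) vs := ⟨hvspos.le, le_rfl⟩
  have hG0 : G 0 = a := by
    have := (Sfu 0 self_mem_Ici).injOn (hGmem 0 hleft).1 (ha.le : a ∈ Set.Ici (0:ℝ))
    exact this (by rw [hfa]; exact hGroot 0 hleft)
  have hGvs : G vs = 0 := by
    have := (Sfu vs hvspos.le).injOn (hGmem vs hright).1 (self_mem_Ici : (0:ℝ) ∈ Set.Ici 0)
    exact this (by rw [hvs0]; exact hGroot vs hright)
  -- compactness constants on S = [0,M] × [0,vs]
  set S : Set (ℝ × ℝ) := Set.Icc (0:ℝ) M ×ˢ Set.Icc (0:ℝ) vs with hSdef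
  have hSsub : S ⊆ Set.Ici (0:ℝ) ×ˢ Set.Ici (0:ℝ) :=
    Set.prod_mono Icc_subset_Ici_self Icc_subset_Ici_self
  have hScomp : IsCompact S := isCompact_Icc.prod isCompact_Icc
  have hSne : S.Nonempty := ⟨(0,0), ⟨⟨le_rfl, hM.le⟩, ⟨le_rfl, hvspos.le⟩⟩⟩
  obtain ⟨qδ, hqδS, hqδmin⟩ := hScomp.exists_isMinOn hSne ((hfuc.mono hSsub).neg)
  set δ := -(fu qδ.1 qδ.2) with hδdef
  have hδpos : 0 < δ := neg_pos.mpr ((hsign qδ.1 (hSsub hqδS).1 qδ.2 (hSsub hqδS).2).1)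
  have hδ : ∀ q ∈ S, fu q.1 q.2 ≤ -δ := by
    intro q hq
    have := isMinOn_iff.mp hqδmin q hq
    simp only [Pi.neg_apply] at this
    linarith
  obtain ⟨qB, hqBS, hqBmax⟩ := hScomp.exists_isMaxOn hSne ((hfvc.mono hSsub).neg)
  set B := -(fv qB.1 qB.2) with hBdef
  have hBpos : 0 < B := neg_pos.mpr ((hsign qB.1 (hSsub hqBS).1 qB.2 (hSsub hqBS).2).2.1)
  have hB : ∀ q ∈ S, -(fv q.1 q.2) ≤ B := by
    intro q hq
    have := isMaxOn_iff.mp hqBmax q hq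
    simp only [Pi.neg_apply] at this
    linarith
  -- the four-point determinant function and a uniform ε
  set N' : (ℝ×ℝ)×(ℝ×ℝ)×(ℝ×ℝ)×(ℝ×ℝ) → ℝ := fun w =>
    gu w.2.2.1.1 w.2.2.1.2 * fv w.2.1.1 w.2.1.2 - gv w.2.2.2.1 w.2.2.2.2 * fu w.1.1 w.1.2
    with hN'def
  set W : Set ((ℝ×ℝ)×(ℝ×ℝ)×(ℝ×ℝ)×(ℝ×ℝ)) := S ×ˢ S ×ˢ S ×ˢ S with hWdef
  have hWcomp : IsCompact W := hScomp.prod (hScomp.prod (hScomp.prod hScomp))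
  have hN'c : ContinuousOn N' W := by
    apply ContinuousOn.sub
    · apply ContinuousOn.mul
      · exact (hguc.mono hSsub).comp
          (f := fun w : (ℝ×ℝ)×(ℝ×ℝ)×(ℝ×ℝ)×(ℝ×ℝ) => w.2.2.1)
          (Continuous.continuousOn (by fun_prop)) (fun w hw => hw.2.2.1)
      · exact (hfvc.mono hSsub).comp
          (f := fun w : (ℝ×ℝ)×(ℝ×ℝ)×(ℝ×ℝ)×(ℝ×ℝ) => w.2.1)
          (Continuous.continuousOn (by fun_prop)) (fun w hw => hw.2.1)
    · apply ContinuousOn.mul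
      · exact (hgvc.mono hSsub).comp
          (f := fun w : (ℝ×ℝ)×(ℝ×ℝ)×(ℝ×ℝ)×(ℝ×ℝ) => w.2.2.2)
          (Continuous.continuousOn (by fun_prop)) (fun w hw => hw.2.2.2)
      · exact (hfuc.mono hSsub).comp
          (f := fun w : (ℝ×ℝ)×(ℝ×ℝ)×(ℝ×ℝ)×(ℝ×ℝ) => w.1)
          (Continuous.continuousOn (by fun_prop)) (fun w hw => hw.1)
  have hε : ∃ ε > (0:ℝ), ∀ w ∈ W,
      dist w.1 w.2.1 + dist w.1 w.2.2.1 + dist w.1 w.2.2.2 < ε → N' w < 0 := by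
    set Bad : Set ((ℝ×ℝ)×(ℝ×ℝ)×(ℝ×ℝ)×(ℝ×ℝ)) := W ∩ N' ⁻¹' Set.Ici 0 with hBaddef
    have hBadcomp : IsCompact Bad := IsCompact.of_isClosed_subset hWcomp
      (hN'c.preimage_isClosed_of_isClosed hWcomp.isClosed isClosed_Ici)
      Set.inter_subset_left
    have hdcont : Continuous (fun w : (ℝ×ℝ)×(ℝ×ℝ)×(ℝ×ℝ)×(ℝ×ℝ) =>
        dist w.1 w.2.1 + dist w.1 w.2.2.1 + dist w.1 w.2.2.2) := by fun_prop
    rcases Bad.eq_empty_or_nonempty with hB0 | hBne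
    · refine ⟨1, one_pos, fun w hw _ => ?_⟩
      by_contra hcon'
      push_neg at hcon'
      have : w ∈ Bad := ⟨hw, hcon'⟩
      rw [hB0] at this
      exact absurd this (Set.notMem_empty w)
    · obtain ⟨w0, hw0B, hw0min⟩ := hBadcomp.exists_isMinOn hBne hdcont.continuousOn
      refine ⟨dist w0.1 w0.2.1 + dist w0.1 w0.2.2.1 + dist w0.1 w0.2.2.2, ?_, ?_⟩
      · rcases lt_or_eq_of_le (by positivity :
            (0:ℝ) ≤ dist w0.1 w0.2.1 + dist w0.1 w0.2.2.1 + dist w0.1 w0.2.2.2) with h' | h'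
        · exact h'
        · exfalso
          have hz1 : dist w0.1 w0.2.1 = 0 := by
            have := dist_nonneg (x := w0.1) (y := w0.2.1)
            have := dist_nonneg (x := w0.1) (y := w0.2.2.1)
            have := dist_nonneg (x := w0.1) (y := w0.2.2.2)
            linarith
          have hz2 : dist w0.1 w0.2.2.1 = 0 := by
            have := dist_nonneg (x := w0.1) (y := w0.2.1)
            have := dist_nonneg (x := w0.1) (y := w0.2.2.1)
            have := dist_nonneg (x := w0.1) (y := w0.2.2.2)
            linarith
          have hz3 : dist w0.1 w0.2.2.2 = 0 := by
            have := dist_nonneg (x := w0.1) (y := w0.2.1)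
            have := dist_nonneg (x := w0.1) (y := w0.2.2.1)
            have := dist_nonneg (x := w0.1) (y := w0.2.2.2)
            linarith
          have he1 : w0.2.1 = w0.1 := (dist_eq_zero.mp hz1).symm
          have he2 : w0.2.2.1 = w0.1 := (dist_eq_zero.mp hz2).symm
          have he3 : w0.2.2.2 = w0.1 := (dist_eq_zero.mp hz3).symm
          have hpS : w0.1 ∈ S := hw0B.1.1
          have hp1 : w0.1.1 ∈ Set.Ici (0:ℝ) := (hSsub hpS).1
          have hp2 : w0.1.2 ∈ Set.Ici (0:ℝ) := (hSsub hpS).2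
          have hd0 := hdet w0.1.1 hp1 w0.1.2 hp2
          have hNeval : N' w0 = fv w0.1.1 w0.1.2 * gu w0.1.1 w0.1.2
              - fu w0.1.1 w0.1.2 * gv w0.1.1 w0.1.2 := by
            rw [hN'def]
            simp only [he1, he2, he3]
            ring
          have hbad := hw0B.2
          simp only [Set.mem_preimage, Set.mem_Ici] at hbad
          rw [hNeval] at hbad
          linarith
      · intro w hw hdw
        by_contra hcon'
        push_neg at hcon'
        have hwBad : w ∈ Bad := ⟨hw, hcon'⟩
        have := isMinOn_iff.mp hw0min w hwBad
        linarith
  obtain ⟨ε, hεpos, hεprop⟩ := hε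
  have hBδpos : 0 < B / δ + 1 := by positivity
  set σ := ε / (6 * (B / δ + 1)) with hσdef
  have hσpos : 0 < σ := by positivity
  have hσε : σ * (6 * (B / δ + 1)) = ε := by
    rw [hσdef]; field_simp
  -- the one-step decrease lemma
  have hstep : ∀ v1 ∈ Set.Icc (0:ℝ) vs, ∀ v2 ∈ Set.Icc (0:ℝ) vs, v1 < v2 → v2 - v1 ≤ σ →
      g (G v2) v2 < g (G v1) v1 := by
    intro v1 hv1 v2 hv2 h12 hleσ
    have hG1m := hGmem v1 hv1
    have hG2m := hGmem v2 hv2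
    set u1 := G v1 with hu1def
    set u2 := G v2 with hu2def
    have hu : u2 < u1 := hGanti v1 hv1 v2 hv2 h12
    have hΔv : 0 < v2 - v1 := sub_pos.mpr h12
    have hu2nn : 0 ≤ u2 := hG2m.1
    have hv1nn : 0 ≤ v1 := hv1.1
    obtain ⟨c, hcIoo, E1⟩ := aux_mvt hu2nn hu
      ((aux_slice1 hfc hv1nn).mono (fun t ht => hu2nn.trans ht.1))
      (fun t ht => hdfu t ht v1 hv1nn)
    obtain ⟨d, hdIoo, E2⟩ := aux_mvt hv1nn h12
      ((aux_slice2 hfc hu2nn).mono (fun t ht => hv1nn.trans ht.1))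
      (fun t ht => hdfv u2 hu2nn t ht)
    obtain ⟨c', hc'Ioo, E3⟩ := aux_mvt hu2nn hu
      ((aux_slice1 hgc hv1nn).mono (fun t ht => hu2nn.trans ht.1))
      (fun t ht => hdgu t ht v1 hv1nn)
    obtain ⟨d', hd'Ioo, E4⟩ := aux_mvt hv1nn h12
      ((aux_slice2 hgc hu2nn).mono (fun t ht => hv1nn.trans ht.1))
      (fun t ht => hdgv u2 hu2nn t ht)
    have R1 : f u1 v1 = 0 := hGroot v1 hv1
    have R2 : f u2 v2 = 0 := hGroot v2 hv2
    have E12 : fu c v1 * (u1 - u2) = fv u2 d * (v2 - v1) := by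
      rw [E1, E2, R1, R2]
    have hcS : ((c, v1) : ℝ × ℝ) ∈ S :=
      ⟨⟨hu2nn.trans hcIoo.1.le, hcIoo.2.le.trans hG1m.2⟩, hv1⟩
    have hdS : ((u2, d) : ℝ × ℝ) ∈ S :=
      ⟨hG2m, ⟨hv1nn.trans hdIoo.1.le, hdIoo.2.le.trans hv2.2⟩⟩
    have hc'S : ((c', v1) : ℝ × ℝ) ∈ S :=
      ⟨⟨hu2nn.trans hc'Ioo.1.le, hc'Ioo.2.le.trans hG1m.2⟩, hv1⟩
    have hd'S : ((u2, d') : ℝ × ℝ) ∈ S :=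
      ⟨hG2m, ⟨hv1nn.trans hd'Ioo.1.le, hd'Ioo.2.le.trans hv2.2⟩⟩
    have hfuc' : fu c v1 ≤ -δ := hδ _ hcS
    have hfvB : -(fv u2 d) ≤ B := hB _ hdS
    have hub : u1 - u2 ≤ B / δ * (v2 - v1) := by
      rw [div_mul_eq_mul_div, le_div_iff₀ hδpos]
      nlinarith [E12, mul_le_mul_of_nonneg_right hfuc' (sub_nonneg.mpr hu.le),
        mul_le_mul_of_nonneg_right hfvB hΔv.le]
    have hwW : (((c,v1), (u2,d), (c',v1), (u2,d')) :
        (ℝ×ℝ)×(ℝ×ℝ)×(ℝ×ℝ)×(ℝ×ℝ)) ∈ W := ⟨hcS, hdS, hc'S, hd'S⟩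
    have hd1 : dist ((c,v1) : ℝ×ℝ) ((u2,d) : ℝ×ℝ) ≤ (u1 - u2) + (v2 - v1) := by
      rw [Prod.dist_eq]
      apply max_le
      · rw [Real.dist_eq, abs_of_pos (sub_pos.mpr hcIoo.1)]
        linarith [hcIoo.2]
      · rw [Real.dist_eq, abs_of_neg (sub_neg.mpr hdIoo.1)]
        linarith [hdIoo.2, hu.le]
    have hd2 : dist ((c,v1) : ℝ×ℝ) ((c',v1) : ℝ×ℝ) ≤ (u1 - u2) + (v2 - v1) := by
      rw [Prod.dist_eq]
      apply max_le
      · rw [Real.dist_eq]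
        rw [abs_le]
        constructor <;> [linarith [hcIoo.1, hcIoo.2, hc'Ioo.1, hc'Ioo.2];
          linarith [hcIoo.1, hcIoo.2, hc'Ioo.1, hc'Ioo.2]]
      · rw [dist_self]
        linarith [hu.le, hΔv.le]
    have hd3 : dist ((c,v1) : ℝ×ℝ) ((u2,d') : ℝ×ℝ) ≤ (u1 - u2) + (v2 - v1) := by
      rw [Prod.dist_eq]
      apply max_le
      · rw [Real.dist_eq, abs_of_pos (sub_pos.mpr hcIoo.1)]
        linarith [hcIoo.2]
      · rw [Real.dist_eq, abs_of_neg (sub_neg.mpr hd'Ioo.1)]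
        linarith [hd'Ioo.2, hu.le]
    have hdistlt : dist ((c,v1) : ℝ×ℝ) ((u2,d) : ℝ×ℝ)
        + dist ((c,v1) : ℝ×ℝ) ((c',v1) : ℝ×ℝ)
        + dist ((c,v1) : ℝ×ℝ) ((u2,d') : ℝ×ℝ) < ε := by
      have hexp : (B / δ + 1) * (v2 - v1) = B / δ * (v2 - v1) + (v2 - v1) := by ring
      have hKv : (u1 - u2) + (v2 - v1) ≤ (B / δ + 1) * (v2 - v1) := by
        linarith [hub, hexp]
      have h3K : 3 * ((B / δ + 1) * (v2 - v1)) ≤ 3 * ((B / δ + 1) * σ) := by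
        have := mul_le_mul_of_nonneg_left hleσ hBδpos.le
        linarith
      have hhalf : 3 * ((B / δ + 1) * σ) = ε / 2 := by linear_combination hσε / 2
      linarith [hd1, hd2, hd3, hKv, h3K, hhalf, hεpos]
    have hNw := hεprop _ hwW hdistlt
    rw [hN'def] at hNw
    simp only at hNw
    have hfucneg : fu c v1 < 0 := lt_of_le_of_lt hfuc' (by linarith)
    have hbr : 0 < gu c' v1 * (u1 - u2) - gv u2 d' * (v2 - v1) := by
      by_contra hbr'
      push_neg at hbr'
      have h1 : 0 ≤ (gu c' v1 * (u1 - u2) - gv u2 d' * (v2 - v1)) * fu c v1 :=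
        by nlinarith [mul_nonneg (neg_nonneg.mpr hbr') (neg_nonneg.mpr hfucneg.le)]
      have h2 : (gu c' v1 * (u1 - u2) - gv u2 d' * (v2 - v1)) * fu c v1
          = (v2 - v1) * (gu c' v1 * fv u2 d - gv u2 d' * fu c v1) := by
        linear_combination gu c' v1 * E12
      nlinarith [mul_neg_of_pos_of_neg hΔv hNw]
    linarith [E3, E4, hbr]
  -- chaining
  obtain ⟨Nn, hNn⟩ := exists_nat_gt (vs / σ)
  have hNnpos : 0 < (Nn:ℝ) := lt_of_le_of_lt (by positivity) hNn
  set st := vs / (Nn:ℝ) with hstdef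
  have hstpos : 0 < st := div_pos hvspos hNnpos
  have hNh : (Nn:ℝ) * st = vs := by
    rw [hstdef]
    field_simp
  have hstσ : st ≤ σ := by
    rw [hstdef, div_le_iff₀ hNnpos]
    have := (div_lt_iff₀ hσpos).mp hNn
    nlinarith
  have hmemi : ∀ i : ℕ, i ≤ Nn → (i:ℝ) * st ∈ Set.Icc (0:ℝ) vs := by
    intro i hi
    constructor
    · exact mul_nonneg (Nat.cast_nonneg i) hstpos.le
    · calc (i:ℝ) * st ≤ (Nn:ℝ) * st := by
            apply mul_le_mul_of_nonneg_right _ hstpos.le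
            exact_mod_cast hi
        _ = vs := hNh
  have hchain : ∀ i : ℕ, i ≤ Nn → g (G ((i:ℝ) * st)) ((i:ℝ) * st) ≤ g (G 0) 0 := by
    intro i
    induction i with
    | zero => intro _; simp
    | succ k ih =>
      intro hi
      have hk : k ≤ Nn := Nat.le_of_succ_le hi
      have hcast : ((k+1:ℕ):ℝ) = (k:ℝ) + 1 := by push_cast; ring
      have hlt : (k:ℝ) * st < ((k:ℝ) + 1) * st := by nlinarith [hstpos]
      have hsub : ((k:ℝ) + 1) * st - (k:ℝ) * st ≤ σ := by
        have : ((k:ℝ) + 1) * st - (k:ℝ) * st = st := by ring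
        linarith [hstσ]
      have hm2 : ((k:ℝ) + 1) * st ∈ Set.Icc (0:ℝ) vs := by
        rw [← hcast]; exact hmemi (k+1) hi
      have key := hstep ((k:ℝ) * st) (hmemi k hk) (((k:ℝ) + 1) * st) hm2 hlt hsub
      rw [hcast]
      exact le_trans key.le (ih hk)
  have hfin := hchain Nn le_rfl
  rw [hNh, hGvs, hG0] at hfin
  have hvsη : vs ≤ η := hvsIcc.2
  have hgvsη : g 0 η ≤ g 0 vs := by
    rcases eq_or_lt_of_le hvsη with h' | h'
    · rw [h']
    · exact (Sgv 0 self_mem_Ici hvsIcc.1 (hvsIcc.1.trans hvsη) h').le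
  linarith


theorem stmt_14
    {n : ℕ} (hn : 1 ≤ n)
    (Ω : Set (Fin n → ℝ)) (hΩo : IsOpen Ω) (hΩb : Bornology.IsBounded Ω)
    (hΩc : IsConnected Ω)
    (p : (Fin n → ℝ) → (Fin n → ℝ) → ℝ)
    (hpc : Continuous (Function.uncurry p)) (hpnn : ∀ x y, 0 ≤ p x y)
    (hpd : ∀ x, 0 < p x x)
    (hp1 : ∀ x, (∫ y, p x y) = 1) (hp2 : ∀ x, (∫ y, p y x) = 1)
    (f g fu fv gu gv : (Fin n → ℝ) → ℝ → ℝ → ℝ)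
    (hdfu : ∀ x ∈ closure Ω, ∀ u ∈ Set.Ici (0:ℝ), ∀ v ∈ Set.Ici (0:ℝ),
      HasDerivWithinAt (fun s => f x s v) (fu x u v) (Set.Ici 0) u)
    (hdfv : ∀ x ∈ closure Ω, ∀ u ∈ Set.Ici (0:ℝ), ∀ v ∈ Set.Ici (0:ℝ),
      HasDerivWithinAt (fun s => f x u s) (fv x u v) (Set.Ici 0) v)
    (hdgu : ∀ x ∈ closure Ω, ∀ u ∈ Set.Ici (0:ℝ), ∀ v ∈ Set.Ici (0:ℝ),
      HasDerivWithinAt (fun s => g x s v) (gu x u v) (Set.Ici 0) u)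
    (hdgv : ∀ x ∈ closure Ω, ∀ u ∈ Set.Ici (0:ℝ), ∀ v ∈ Set.Ici (0:ℝ),
      HasDerivWithinAt (fun s => g x u s) (gv x u v) (Set.Ici 0) v)
    (hfcont : ContinuousOn (fun q : (Fin n → ℝ) × ℝ × ℝ => f q.1 q.2.1 q.2.2)
      ((closure Ω) ×ˢ (Set.Ici 0 ×ˢ Set.Ici 0)))
    (hgcont : ContinuousOn (fun q : (Fin n → ℝ) × ℝ × ℝ => g q.1 q.2.1 q.2.2)
      ((closure Ω) ×ˢ (Set.Ici 0 ×ˢ Set.Ici 0)))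
    (hfucont : ContinuousOn (fun q : (Fin n → ℝ) × ℝ × ℝ => fu q.1 q.2.1 q.2.2)
      ((closure Ω) ×ˢ (Set.Ici 0 ×ˢ Set.Ici 0)))
    (hfvcont : ContinuousOn (fun q : (Fin n → ℝ) × ℝ × ℝ => fv q.1 q.2.1 q.2.2)
      ((closure Ω) ×ˢ (Set.Ici 0 ×ˢ Set.Ici 0)))
    (hgucont : ContinuousOn (fun q : (Fin n → ℝ) × ℝ × ℝ => gu q.1 q.2.1 q.2.2)
      ((closure Ω) ×ˢ (Set.Ici 0 ×ˢ Set.Ici 0)))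
    (hgvcont : ContinuousOn (fun q : (Fin n → ℝ) × ℝ × ℝ => gv q.1 q.2.1 q.2.2)
      ((closure Ω) ×ˢ (Set.Ici 0 ×ˢ Set.Ici 0)))
    (hA2 : ∀ x ∈ closure Ω, ∀ u ∈ Set.Ici (0:ℝ), ∀ v ∈ Set.Ici (0:ℝ),
      fu x u v < 0 ∧ gv x u v < 0)
    (hA3 : ∀ x ∈ closure Ω, ∀ u ∈ Set.Ici (0:ℝ), ∀ v ∈ Set.Ici (0:ℝ),
      fv x u v < 0 ∧ gu x u v < 0)
    (M : ℝ) (hM : 0 < M)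
    (hA4 : ∀ x ∈ closure Ω, ∀ u ∈ Set.Ici (0:ℝ), ∀ v ∈ Set.Ici (0:ℝ),
      (M ≤ u → f x u v < 0) ∧ (M ≤ v → g x u v < 0))
    (hA5 : ∀ x ∈ closure Ω, ∀ u ∈ Set.Ici (0:ℝ), ∀ v ∈ Set.Ici (0:ℝ),
      fv x u v * gu x u v < fu x u v * gv x u v)
    (F : (Fin n → ℝ) → ℝ → ℝ)
    (hFcont : ContinuousOn (fun q : (Fin n → ℝ) × ℝ => F q.1 q.2) ((closure Ω) ×ˢ Set.Ici 0))
    (hF : ∀ x ∈ closure Ω, ∀ v ∈ Set.Ici (0:ℝ), f x (F x v) v = 0)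
    (D : ℝ) (hD : 0 < D)
    (T : (↥(closure Ω) →ᵇ ℂ) →L[ℂ] (↥(closure Ω) →ᵇ ℂ))
    (hT : ∀ (φ : ((Fin n → ℝ) →ᵇ ℂ)) (x : ↥(closure Ω)),
      T (φ.compContinuous (ContinuousMap.mk Subtype.val continuous_subtype_val)) x
        = (D : ℂ) * ((∫ y in Ω, (p x.1 y : ℂ) * φ y) - φ x.1)
          + ((g x.1 (max (F x.1 0) 0) 0 : ℝ) : ℂ) * φ x.1)
    (μ₀ : ℝ) (hμ₀ : μ₀ = sSup (Complex.re '' spectrum ℂ T))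
    (hchar : μ₀ = sSup {r : ℝ | ∃ φ : (Fin n → ℝ) → ℝ, ContinuousOn φ (closure Ω) ∧
      (∀ x ∈ closure Ω, 0 < φ x) ∧
      r = sInf ((fun x => (D * ((∫ y in Ω, p x y * φ y) - φ x)
        + g x (max (F x 0) 0) 0 * φ x) / φ x) '' Ω)})
    (ηD : (Fin n → ℝ) → ℝ)
    (hηc : ContinuousOn ηD (closure Ω)) (hηpos : ∀ x ∈ closure Ω, 0 < ηD x)
    (hηeq : ∀ x ∈ closure Ω,
      D * ((∫ y in Ω, p x y * ηD y) - ηD x) + ηD x * g x 0 (ηD x) = 0)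
    (hμneg : μ₀ < 0) :
    0 < sSup ((fun x => f x 0 (ηD x)) '' closure Ω) := by
  -- Part 1: from hchar and μ₀ < 0, find a point x₀ where the eigen-quotient is negative
  have hmem : sInf ((fun x => (D * ((∫ y in Ω, p x y * ηD y) - ηD x)
      + g x (max (F x 0) 0) 0 * ηD x) / ηD x) '' Ω) ∈
      {r : ℝ | ∃ φ : (Fin n → ℝ) → ℝ, ContinuousOn φ (closure Ω) ∧
      (∀ x ∈ closure Ω, 0 < φ x) ∧
      r = sInf ((fun x => (D * ((∫ y in Ω, p x y * φ y) - φ x)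
        + g x (max (F x 0) 0) 0 * φ x) / φ x) '' Ω)} := ⟨ηD, hηc, hηpos, rfl⟩
  have hbdd : BddAbove {r : ℝ | ∃ φ : (Fin n → ℝ) → ℝ, ContinuousOn φ (closure Ω) ∧
      (∀ x ∈ closure Ω, 0 < φ x) ∧
      r = sInf ((fun x => (D * ((∫ y in Ω, p x y * φ y) - φ x)
        + g x (max (F x 0) 0) 0 * φ x) / φ x) '' Ω)} := by
    by_contra hb
    rw [hchar, Real.sSup_of_not_bddAbove hb] at hμneg
    exact absurd hμneg (lt_irrefl 0)
  have hle : sInf ((fun x => (D * ((∫ y in Ω, p x y * ηD y) - ηD x)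
      + g x (max (F x 0) 0) 0 * ηD x) / ηD x) '' Ω) ≤ μ₀ := by
    rw [hchar]; exact le_csSup hbdd hmem
  have hneg : sInf ((fun x => (D * ((∫ y in Ω, p x y * ηD y) - ηD x)
      + g x (max (F x 0) 0) 0 * ηD x) / ηD x) '' Ω) < 0 := lt_of_le_of_lt hle hμneg
  obtain ⟨x₀, hx₀Ω, hx₀neg⟩ : ∃ x ∈ Ω, (D * ((∫ y in Ω, p x y * ηD y) - ηD x)
      + g x (max (F x 0) 0) 0 * ηD x) / ηD x < 0 := by
    by_contra hall
    push_neg at hall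
    have h0 : 0 ≤ sInf ((fun x => (D * ((∫ y in Ω, p x y * ηD y) - ηD x)
        + g x (max (F x 0) 0) 0 * ηD x) / ηD x) '' Ω) := by
      apply Real.sInf_nonneg
      rintro r ⟨x, hx, rfl⟩
      exact hall x hx
    linarith
  have hx₀c : x₀ ∈ closure Ω := subset_closure hx₀Ω
  have hη₀ : 0 < ηD x₀ := hηpos x₀ hx₀c
  have hnum : D * ((∫ y in Ω, p x₀ y * ηD y) - ηD x₀)
      + g x₀ (max (F x₀ 0) 0) 0 * ηD x₀ < 0 := by
    rcases div_neg_iff.mp hx₀neg with ⟨h1, h2⟩ | ⟨h1, h2⟩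
    · linarith
    · exact h1
  have heq := hηeq x₀ hx₀c
  have hgs : g x₀ (max (F x₀ 0) 0) 0 < g x₀ 0 (ηD x₀) := by
    have h2 : (g x₀ (max (F x₀ 0) 0) 0) * ηD x₀ < (g x₀ 0 (ηD x₀)) * ηD x₀ := by
      nlinarith [hnum, heq]
    exact lt_of_mul_lt_mul_right h2 hη₀.le
  -- Part 2: apply the nullcline comparison lemma at x₀
  have cf : ContinuousOn (fun q : ℝ × ℝ => f x₀ q.1 q.2) (Set.Ici 0 ×ˢ Set.Ici 0) :=
    hfcont.comp (f := fun q : ℝ × ℝ => ((x₀, q.1, q.2) : (Fin n → ℝ) × ℝ × ℝ))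
      (Continuous.continuousOn (by fun_prop)) (fun q hq => ⟨hx₀c, hq.1, hq.2⟩)
  have cg : ContinuousOn (fun q : ℝ × ℝ => g x₀ q.1 q.2) (Set.Ici 0 ×ˢ Set.Ici 0) :=
    hgcont.comp (f := fun q : ℝ × ℝ => ((x₀, q.1, q.2) : (Fin n → ℝ) × ℝ × ℝ))
      (Continuous.continuousOn (by fun_prop)) (fun q hq => ⟨hx₀c, hq.1, hq.2⟩)
  have cfu : ContinuousOn (fun q : ℝ × ℝ => fu x₀ q.1 q.2) (Set.Ici 0 ×ˢ Set.Ici 0) :=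
    hfucont.comp (f := fun q : ℝ × ℝ => ((x₀, q.1, q.2) : (Fin n → ℝ) × ℝ × ℝ))
      (Continuous.continuousOn (by fun_prop)) (fun q hq => ⟨hx₀c, hq.1, hq.2⟩)
  have cfv : ContinuousOn (fun q : ℝ × ℝ => fv x₀ q.1 q.2) (Set.Ici 0 ×ˢ Set.Ici 0) :=
    hfvcont.comp (f := fun q : ℝ × ℝ => ((x₀, q.1, q.2) : (Fin n → ℝ) × ℝ × ℝ))
      (Continuous.continuousOn (by fun_prop)) (fun q hq => ⟨hx₀c, hq.1, hq.2⟩)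
  have cgu : ContinuousOn (fun q : ℝ × ℝ => gu x₀ q.1 q.2) (Set.Ici 0 ×ˢ Set.Ici 0) :=
    hgucont.comp (f := fun q : ℝ × ℝ => ((x₀, q.1, q.2) : (Fin n → ℝ) × ℝ × ℝ))
      (Continuous.continuousOn (by fun_prop)) (fun q hq => ⟨hx₀c, hq.1, hq.2⟩)
  have cgv : ContinuousOn (fun q : ℝ × ℝ => gv x₀ q.1 q.2) (Set.Ici 0 ×ˢ Set.Ici 0) :=
    hgvcont.comp (f := fun q : ℝ × ℝ => ((x₀, q.1, q.2) : (Fin n → ℝ) × ℝ × ℝ))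
      (Continuous.continuousOn (by fun_prop)) (fun q hq => ⟨hx₀c, hq.1, hq.2⟩)
  have hf0η : 0 < f x₀ 0 (ηD x₀) := by
    refine aux_key (f := fun u v => f x₀ u v) (g := fun u v => g x₀ u v)
      (fu := fun u v => fu x₀ u v) (fv := fun u v => fv x₀ u v)
      (gu := fun u v => gu x₀ u v) (gv := fun u v => gv x₀ u v)
      (M := M) (a := F x₀ 0) (η := ηD x₀)
      (fun u hu v hv => hdfu x₀ hx₀c u hu v hv)
      (fun u hu v hv => hdfv x₀ hx₀c u hu v hv)
      (fun u hu v hv => hdgu x₀ hx₀c u hu v hv)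
      (fun u hu v hv => hdgv x₀ hx₀c u hu v hv)
      cf cg cfu cfv cgu cgv
      (fun u hu v hv => ⟨(hA2 x₀ hx₀c u hu v hv).1, (hA3 x₀ hx₀c u hu v hv).1,
        (hA3 x₀ hx₀c u hu v hv).2, (hA2 x₀ hx₀c u hu v hv).2⟩)
      (fun u hu v hv => hA5 x₀ hx₀c u hu v hv)
      hM (fun v hv => (hA4 x₀ hx₀c M hM.le v hv).1 le_rfl)
      hη₀ (hF x₀ hx₀c 0 Set.self_mem_Ici) hgs
  -- Part 3: conclude via compactness
  have hcomp : IsCompact (closure Ω) :=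
    Metric.isCompact_of_isClosed_isBounded isClosed_closure hΩb.closure
  have hcont : ContinuousOn (fun x => f x 0 (ηD x)) (closure Ω) := by
    apply hfcont.comp (f := fun x => ((x, (0:ℝ), ηD x) : (Fin n → ℝ) × ℝ × ℝ))
    · exact continuousOn_id.prodMk (continuousOn_const.prodMk hηc)
    · intro x hx
      exact ⟨hx, Set.self_mem_Ici, (hηpos x hx).le⟩
  have hbddim : BddAbove ((fun x => f x 0 (ηD x)) '' closure Ω) :=
    (hcomp.image_of_continuousOn hcont).bddAbove
  have hmemim : f x₀ 0 (ηD x₀) ∈ (fun x => f x 0 (ηD x)) '' closure Ω := ⟨x₀, hx₀c, rfl⟩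
  exact lt_of_lt_of_le hf0η (le_csSup hbddim hmemim)
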